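/- arXiv:1404.2694 — 2 statements merged into one kernel-verified Lean document; each statement's English description precedes it below -/
import Mathlib

section
/- Let σ be a positive Borel measure on ℝⁿ, let Q₀ be a dyadic cube, let f ∈ L^p(dσ) be nonnegative and supported in Q₀, and let F be the collection of principal cubes for the pair (f,σ). Then for every F ∈ F, the children satisfy ∑_{F' ∈ ch_F(F)} σ(F') ≤ σ(F)/2. -/
open MeasureTheory ENNReal Set
open scoped BigOperators NNReal

noncomputable section

/-- Points of `ℝⁿ`, realized as functions `Fin n → ℝ`. -/
abbrev RN (n : ℕ) := Fin n → ℝ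

/-- A dyadic cube `Q = 2^{-k}(m + [0,1)^n)` in `ℝⁿ`, recorded by its generation `k`
and lower-left corner `m`. -/
structure DyadicCube (n : ℕ) where
  k : ℤ
  m : Fin n → ℤ

namespace DyadicCube

variable {n : ℕ}

/-- The set of points of the dyadic cube `2^{-k}(m + [0,1)^n)`. -/
def carrier (Q : DyadicCube n) : Set (RN n) :=
  {x | ∀ i, (Q.m i : ℝ) * 2 ^ (-Q.k) ≤ x i ∧ x i < ((Q.m i : ℝ) + 1) * 2 ^ (-Q.k)}

instance : Countable (DyadicCube n) := by
  have h : Function.Injective fun Q : DyadicCube n => (Q.k, Q.m) := by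
    intro a b hab
    cases a; cases b
    simp only [Prod.mk.injEq] at hab
    simp [hab.1, hab.2]
  exact h.countable

/-- The indicator function `1_Q` of a dyadic cube, with values in `ℝ≥0∞`. -/
def indFun (Q : DyadicCube n) : RN n → ℝ≥0∞ :=
  Q.carrier.indicator 1

/-- The dual exponent `p' = p/(p-1)`. -/
def dual (p : ℝ) : ℝ := p / (p - 1)

open Classical in
/-- The kernel `K(Q,μ)` given by `K(Q,μ)(Q') = K(Q') μ(Q')` for `Q' ⊆ Q` and `0` otherwise. -/
def KQ (K : DyadicCube n → ℝ≥0∞) (μ : Measure (RN n)) (Q : DyadicCube n) :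
    DyadicCube n → ℝ≥0∞ :=
  fun Q' => if Q'.carrier ⊆ Q.carrier then K Q' * μ Q'.carrier else 0

open Classical in
/-- The function `∑_{Q' ⊆ Q} K(Q') μ(Q') 1_{Q'}(x)`. -/
def kernelSum (K : DyadicCube n → ℝ≥0∞) (μ : Measure (RN n)) (Q : DyadicCube n)
    (x : RN n) : ℝ≥0∞ :=
  ∑' Q' : DyadicCube n,
    (if Q'.carrier ⊆ Q.carrier then K Q' * μ Q'.carrier else 0) * indFun Q' x

open Classical in
/-- The function `K̄_μ(Q)(x) = μ(Q)⁻¹ ∑_{Q' ⊆ Q} K(Q') μ(Q') 1_{Q'}(x)`, interpreted as `0`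
when `μ(Q) = 0`. -/
def kbar (K : DyadicCube n → ℝ≥0∞) (μ : Measure (RN n)) (Q : DyadicCube n)
    (x : RN n) : ℝ≥0∞ :=
  if μ Q.carrier = 0 then 0 else (μ Q.carrier)⁻¹ * kernelSum K μ Q x

/-- The discrete Wolff potential
`W^p_{K,μ}[ν](x) = ∑_Q K(Q) μ(Q) (∫_Q K̄_μ(Q) dν)^{p-1} 1_Q(x)`. -/
def wolff (K : DyadicCube n → ℝ≥0∞) (μ ν : Measure (RN n)) (p : ℝ) (x : RN n) : ℝ≥0∞ :=
  ∑' Q : DyadicCube n,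
    K Q * μ Q.carrier * (∫⁻ y in Q.carrier, kbar K μ Q y ∂ν) ^ (p - 1) * indFun Q x

/-- The average `⨍_Q f dμ = μ(Q)⁻¹ ∫_Q f dμ` (in `ℝ≥0∞`; it is `0` when `μ(Q) = 0`). -/
def avg (σ : Measure (RN n)) (f : RN n → ℝ) (Q : DyadicCube n) : ℝ≥0∞ :=
  (σ Q.carrier)⁻¹ * ∫⁻ x in Q.carrier, ENNReal.ofReal (f x) ∂σ

/-- The dyadic Hardy–Littlewood maximal operator
`M_σ f(x) = sup_{Q ∋ x} ⨍_Q |f| dσ`. -/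
def dyadicMaximal (σ : Measure (RN n)) (f : RN n → ℝ) (x : RN n) : ℝ≥0∞ :=
  ⨆ (Q : DyadicCube n) (_ : x ∈ Q.carrier), avg σ (fun y => |f y|) Q

/-- `ch_F(F)`: the maximal dyadic cubes `Q ⊆ F` with `⨍_Q f dσ > 2 ⨍_F f dσ`. -/
def chPrin (σ : Measure (RN n)) (f : RN n → ℝ) (F : DyadicCube n) : Set (DyadicCube n) :=
  {Q | Q.carrier ⊆ F.carrier ∧ 2 * avg σ f F < avg σ f Q ∧
    ∀ R : DyadicCube n, R.carrier ⊆ F.carrier → Q.carrier ⊆ R.carrier →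
      2 * avg σ f F < avg σ f R → R = Q}

/-- The generations `F^k` of principal cubes for the pair `(f, σ)` starting from `Q₀`. -/
def prinLevel (σ : Measure (RN n)) (f : RN n → ℝ) (Q₀ : DyadicCube n) :
    ℕ → Set (DyadicCube n)
  | 0 => {Q₀}
  | k + 1 => ⋃ F ∈ prinLevel σ f Q₀ k, chPrin σ f F

/-- The collection `F = ⋃_k F^k` of principal cubes for the pair `(f, σ)`. -/
def principal (σ : Measure (RN n)) (f : RN n → ℝ) (Q₀ : DyadicCube n) :
    Set (DyadicCube n) :=
  ⋃ k, prinLevel σ f Q₀ k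

/-- `F` is the stopping parent `π_F(Q)` of `Q`: the minimal principal cube containing `Q`. -/
def IsStoppingParent (σ : Measure (RN n)) (f : RN n → ℝ) (Q₀ Q F : DyadicCube n) : Prop :=
  F ∈ principal σ f Q₀ ∧ Q.carrier ⊆ F.carrier ∧
    ∀ F' ∈ principal σ f Q₀, Q.carrier ⊆ F'.carrier → F.carrier ⊆ F'.carrier

open Classical in
/-- The stopping parent `π_F(Q)`, the minimal principal cube containing `Q`
(junk value `Q₀` if there is none). -/
def stoppingParent (σ : Measure (RN n)) (f : RN n → ℝ) (Q₀ Q : DyadicCube n) :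
    DyadicCube n :=
  if h : ∃ F, IsStoppingParent σ f Q₀ Q F then h.choose else Q₀

/-- The set `E_F(F) = F \ ⋃_{F' ∈ ch_F(F)} F'`. -/
def ESet (σ : Measure (RN n)) (f : RN n → ℝ) (F : DyadicCube n) : Set (RN n) :=
  F.carrier \ ⋃ F' ∈ chPrin σ f F, F'.carrier

/-- `ch^i_{F₃}(H) = {H' ∈ ch_{F₃}(H) : π_{F₃}(π_{F_i}(H')) = H}`. -/
def chStop (σi σ₃ : Measure (RN n)) (fi f₃ : RN n → ℝ) (Q₀ H : DyadicCube n) :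
    Set (DyadicCube n) :=
  {H' | H' ∈ chPrin σ₃ f₃ H ∧
    stoppingParent σ₃ f₃ Q₀ (stoppingParent σi fi Q₀ H') = H}

/-- The modified function
`f_i^H = f_i 1_{E_{F₃}(H)} + ∑_{H' ∈ ch^i_{F₃}(H)} (⨍_{H'} f_i dσ_i) 1_{H'}`. -/
def modFun (σi σ₃ : Measure (RN n)) (fi f₃ : RN n → ℝ) (Q₀ H : DyadicCube n)
    (x : RN n) : ℝ≥0∞ :=
  (ESet σ₃ f₃ H).indicator (fun y => ENNReal.ofReal (fi y)) x +
    ∑' H' : chStop σi σ₃ fi f₃ Q₀ H,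
      (H'.1.carrier.indicator (fun _ => avg σi fi H'.1) x)

/-- The bilinear embedding inequality
`∑_Q K(Q) |∫_Q f₁ dσ₁| |∫_Q f₂ dσ₂| ≤ c ‖f₁‖_{L^{p₁}(σ₁)} ‖f₂‖_{L^{p₂}(σ₂)}`. -/
def bilinearEmbedding (K : DyadicCube n → ℝ≥0∞) (σ₁ σ₂ : Measure (RN n))
    (p₁ p₂ : ℝ) (c : ℝ≥0∞) : Prop :=
  ∀ f₁ f₂ : RN n → ℝ,
    MemLp f₁ (ENNReal.ofReal p₁) σ₁ → MemLp f₂ (ENNReal.ofReal p₂) σ₂ →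
    (∑' Q : DyadicCube n,
        K Q * ENNReal.ofReal |∫ x in Q.carrier, f₁ x ∂σ₁| *
          ENNReal.ofReal |∫ x in Q.carrier, f₂ x ∂σ₂|) ≤
      c * eLpNorm f₁ (ENNReal.ofReal p₁) σ₁ * eLpNorm f₂ (ENNReal.ofReal p₂) σ₂

/-- The trilinear embedding inequality
`∑_Q K(Q) ∏_i |∫_Q f_i dσ_i| ≤ c ∏_i ‖f_i‖_{L^{p_i}(σ_i)}`. -/
def trilinearEmbedding (K : DyadicCube n → ℝ≥0∞) (σ : Fin 3 → Measure (RN n))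
    (p : Fin 3 → ℝ) (c : ℝ≥0∞) : Prop :=
  ∀ f : (i : Fin 3) → RN n → ℝ,
    (∀ i, MemLp (f i) (ENNReal.ofReal (p i)) (σ i)) →
    (∑' Q : DyadicCube n,
        K Q * ∏ i : Fin 3, ENNReal.ofReal |∫ x in Q.carrier, f i x ∂(σ i)|) ≤
      c * ∏ i : Fin 3, eLpNorm (f i) (ENNReal.ofReal (p i)) (σ i)

/-- Sawyer's checking condition for the pair `(σ₁, σ₂)`, with the finiteness clauses. -/
def sawyerTest (K : DyadicCube n → ℝ≥0∞) (σ₁ σ₂ : Measure (RN n))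
    (p₁ p₂ : ℝ) (c : ℝ≥0∞) : Prop :=
  ∀ Q : DyadicCube n,
    ((∫⁻ x in Q.carrier, kernelSum K σ₁ Q x ^ dual p₂ ∂σ₂) ^ (1 / dual p₂) ≤
        c * σ₁ Q.carrier ^ (1 / p₁) ∧ c * σ₁ Q.carrier ^ (1 / p₁) < ⊤) ∧
    ((∫⁻ x in Q.carrier, kernelSum K σ₂ Q x ^ dual p₁ ∂σ₁) ^ (1 / dual p₁) ≤
        c * σ₂ Q.carrier ^ (1 / p₂) ∧ c * σ₂ Q.carrier ^ (1 / p₂) < ⊤)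

/-- The Wolff-potential checking condition for the pair `(σ₁, σ₂)`:
`‖W^{p₂'}_{K,σ₂}[σ₁]^{1/p₂'}‖_{L^r(σ₁)} ≤ c` and `‖W^{p₁'}_{K,σ₁}[σ₂]^{1/p₁'}‖_{L^r(σ₂)} ≤ c`. -/
def wolffTest (K : DyadicCube n → ℝ≥0∞) (σ₁ σ₂ : Measure (RN n))
    (p₁ p₂ r : ℝ) (c : ℝ≥0∞) : Prop :=
  (∫⁻ x, (wolff K σ₂ σ₁ (dual p₂) x ^ (1 / dual p₂)) ^ r ∂σ₁) ^ (1 / r) ≤ c ∧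
  (∫⁻ x, (wolff K σ₁ σ₂ (dual p₁) x ^ (1 / dual p₁)) ^ r ∂σ₂) ^ (1 / r) ≤ c

/-- Condition (b) of the trilinear embedding theorem, without the finiteness clauses. -/
def trilinearTestLe (K : DyadicCube n → ℝ≥0∞) (σ : Fin 3 → Measure (RN n))
    (p : Fin 3 → ℝ) (c : ℝ≥0∞) : Prop :=
  ∀ e : Equiv.Perm (Fin 3),
    (1 ≤ 1 / p (e 0) + 1 / p (e 1) → ∀ Q : DyadicCube n,
      (∫⁻ x in Q.carrier,
          kernelSum (KQ K (σ (e 2)) Q) (σ (e 0)) Q x ^ dual (p (e 1)) ∂(σ (e 1))) ^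
            (1 / dual (p (e 1))) ≤
        c * σ (e 0) Q.carrier ^ (1 / p (e 0)) * σ (e 2) Q.carrier ^ (1 / p (e 2)) ∧
      (∫⁻ x in Q.carrier,
          kernelSum (KQ K (σ (e 2)) Q) (σ (e 1)) Q x ^ dual (p (e 0)) ∂(σ (e 0))) ^
            (1 / dual (p (e 0))) ≤
        c * σ (e 1) Q.carrier ^ (1 / p (e 1)) * σ (e 2) Q.carrier ^ (1 / p (e 2))) ∧
    (1 / p (e 0) + 1 / p (e 1) < 1 → ∀ Q : DyadicCube n, ∀ r : ℝ,
      1 / r + 1 / p (e 0) + 1 / p (e 1) = 1 →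
      (∫⁻ x, (wolff (KQ K (σ (e 2)) Q) (σ (e 1)) (σ (e 0)) (dual (p (e 1))) x ^
          (1 / dual (p (e 1)))) ^ r ∂(σ (e 0))) ^ (1 / r) ≤
        c * σ (e 2) Q.carrier ^ (1 / p (e 2)) ∧
      (∫⁻ x, (wolff (KQ K (σ (e 2)) Q) (σ (e 0)) (σ (e 1)) (dual (p (e 0))) x ^
          (1 / dual (p (e 0)))) ^ r ∂(σ (e 1))) ^ (1 / r) ≤
        c * σ (e 2) Q.carrier ^ (1 / p (e 2)))

/-- Condition (b) of the trilinear embedding theorem, with the finiteness clauses. -/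
def trilinearTest (K : DyadicCube n → ℝ≥0∞) (σ : Fin 3 → Measure (RN n))
    (p : Fin 3 → ℝ) (c : ℝ≥0∞) : Prop :=
  trilinearTestLe K σ p c ∧
  ∀ e : Equiv.Perm (Fin 3),
    (1 ≤ 1 / p (e 0) + 1 / p (e 1) → ∀ Q : DyadicCube n,
      c * σ (e 0) Q.carrier ^ (1 / p (e 0)) * σ (e 2) Q.carrier ^ (1 / p (e 2)) < ⊤ ∧
      c * σ (e 1) Q.carrier ^ (1 / p (e 1)) * σ (e 2) Q.carrier ^ (1 / p (e 2)) < ⊤) ∧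
    (1 / p (e 0) + 1 / p (e 1) < 1 → ∀ Q : DyadicCube n,
      c * σ (e 2) Q.carrier ^ (1 / p (e 2)) < ⊤)

end DyadicCube

open DyadicCube
lemma aux_Ico_nested {k k' m m' : ℤ} (hkk : k ≤ k') {x : ℝ}
    (h1 : (m : ℝ) * 2 ^ (-k) ≤ x) (h2 : x < ((m : ℝ) + 1) * 2 ^ (-k))
    (h3 : (m' : ℝ) * 2 ^ (-k') ≤ x) (h4 : x < ((m' : ℝ) + 1) * 2 ^ (-k'))
    {y : ℝ} (hy1 : (m' : ℝ) * 2 ^ (-k') ≤ y) (hy2 : y < ((m' : ℝ) + 1) * 2 ^ (-k')) :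
    (m : ℝ) * 2 ^ (-k) ≤ y ∧ y < ((m : ℝ) + 1) * 2 ^ (-k) := by
  set D : ℕ := (k' - k).toNat with hD
  have hDk : (D : ℤ) = k' - k := Int.toNat_of_nonneg (by omega)
  have hpow : (2 : ℝ) ^ (-k) = (2 : ℝ) ^ D * 2 ^ (-k') := by
    rw [← zpow_natCast, hDk, ← zpow_add₀ (two_ne_zero)]
    ring_nf
  have hpos : (0 : ℝ) < 2 ^ (-k') := by positivity
  have key1 : (m : ℝ) * 2 ^ D ≤ m' := by
    have : (m : ℝ) * 2 ^ D * 2 ^ (-k') < ((m' : ℝ) + 1) * 2 ^ (-k') := by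
      rw [mul_assoc, ← hpow]; exact lt_of_le_of_lt h1 h4
    have h' : (m : ℝ) * 2 ^ D < (m' : ℝ) + 1 := lt_of_mul_lt_mul_right this hpos.le
    have : (m * 2 ^ D : ℤ) < m' + 1 := by exact_mod_cast h'
    exact_mod_cast Int.lt_add_one_iff.mp this
  have key2 : (m' : ℝ) + 1 ≤ ((m : ℝ) + 1) * 2 ^ D := by
    have : (m' : ℝ) * 2 ^ (-k') < ((m : ℝ) + 1) * 2 ^ D * 2 ^ (-k') := by
      rw [mul_assoc, ← hpow]; exact lt_of_le_of_lt h3 h2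
    have h' : (m' : ℝ) < ((m : ℝ) + 1) * 2 ^ D := lt_of_mul_lt_mul_right this hpos.le
    have : (m' : ℤ) < (m + 1) * 2 ^ D := by exact_mod_cast h'
    exact_mod_cast Int.add_one_le_iff.mpr this
  constructor
  · calc (m : ℝ) * 2 ^ (-k) = (m : ℝ) * 2 ^ D * 2 ^ (-k') := by rw [hpow]; ring
    _ ≤ (m' : ℝ) * 2 ^ (-k') := by gcongr
    _ ≤ y := hy1
  · calc y < ((m' : ℝ) + 1) * 2 ^ (-k') := hy2
    _ ≤ ((m : ℝ) + 1) * 2 ^ D * 2 ^ (-k') := by gcongr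
    _ = ((m : ℝ) + 1) * 2 ^ (-k) := by rw [hpow]; ring

/-- If two dyadic cubes share a point and `Q.k ≤ Q'.k`, then `Q' ⊆ Q`. -/
lemma aux_carrier_subset {n : ℕ} {Q Q' : DyadicCube n} (hk : Q.k ≤ Q'.k) {x : RN n}
    (hx : x ∈ Q.carrier) (hx' : x ∈ Q'.carrier) : Q'.carrier ⊆ Q.carrier := by
  intro y hy i
  exact aux_Ico_nested hk (hx i).1 (hx i).2 (hx' i).1 (hx' i).2 (hy i).1 (hy i).2

/-- Two dyadic cubes that intersect are nested. -/
lemma aux_nested {n : ℕ} {Q Q' : DyadicCube n}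
    (h : (Q.carrier ∩ Q'.carrier).Nonempty) :
    Q.carrier ⊆ Q'.carrier ∨ Q'.carrier ⊆ Q.carrier := by
  obtain ⟨x, hx, hx'⟩ := h
  rcases le_total Q.k Q'.k with hk | hk
  · exact Or.inr (aux_carrier_subset hk hx hx')
  · exact Or.inl (aux_carrier_subset hk hx' hx)

lemma aux_measurableSet_carrier {n : ℕ} (Q : DyadicCube n) :
    MeasurableSet Q.carrier := by
  have : Q.carrier = ⋂ i, (fun x : RN n => x i) ⁻¹'
      (Set.Ico ((Q.m i : ℝ) * 2 ^ (-Q.k)) (((Q.m i : ℝ) + 1) * 2 ^ (-Q.k))) := by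
    ext x; simp [DyadicCube.carrier, Set.mem_Ico]
  rw [this]
  exact MeasurableSet.iInter fun i => (measurable_pi_apply i) measurableSet_Ico

/-- Two distinct principal children have disjoint carriers. -/
lemma aux_children_disjoint {n : ℕ} {σ : Measure (RN n)} {f : RN n → ℝ}
    {F F₁ F₂ : DyadicCube n} (h1 : F₁ ∈ chPrin σ f F) (h2 : F₂ ∈ chPrin σ f F)
    (hne : F₁ ≠ F₂) : Disjoint F₁.carrier F₂.carrier := by
  rw [Set.disjoint_iff_inter_eq_empty]
  by_contra hcon
  have hnon : (F₁.carrier ∩ F₂.carrier).Nonempty := Set.nonempty_iff_ne_empty.mpr hcon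
  rcases aux_nested hnon with hsub | hsub
  · exact hne (h1.2.2 F₂ h2.1 hsub h2.2.1).symm
  · exact hne (h2.2.2 F₁ h1.1 hsub h1.2.1)


/-- For every principal cube `F`, the principal children of `F` satisfy
`∑_{F' ∈ ch_F(F)} σ(F') ≤ σ(F)/2`. -/

theorem sum_measure_children_le (n : ℕ) (σ : Measure (RN n)) (Q₀ : DyadicCube n)
    (p : ℝ≥0∞) (f : RN n → ℝ) (hf : MemLp f p σ) (hf0 : ∀ x, 0 ≤ f x)
    (hsupp : Function.support f ⊆ Q₀.carrier)
    (F : DyadicCube n) (hF : F ∈ principal σ f Q₀) :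
    ∑' F' : chPrin σ f F, σ F'.1.carrier ≤ σ F.carrier / 2 := by
  classical
  by_cases hσtop : σ F.carrier = ⊤
  · rw [hσtop, ENNReal.top_div_of_ne_top (by norm_num : (2 : ℝ≥0∞) ≠ ⊤)]
    exact le_top
  by_cases hσ0 : σ F.carrier = 0
  · have hz : ∀ F' : chPrin σ f F, σ F'.1.carrier = 0 := fun F' =>
      le_antisymm (hσ0 ▸ measure_mono F'.2.1) (zero_le)
    rw [tsum_congr hz, tsum_zero]
    exact zero_le
  rcases Set.eq_empty_or_nonempty (chPrin σ f F) with he | ⟨F₀, hF₀⟩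
  · rw [he, tsum_empty]
    exact zero_le
  set I := ∫⁻ x in F.carrier, ENNReal.ofReal (f x) ∂σ with hI
  set A := avg σ f F with hA
  have hAdef : A = (σ F.carrier)⁻¹ * I := rfl
  have hAtop : A ≠ ⊤ := by
    intro h
    have h2 := hF₀.2.1
    rw [show avg σ f F = A from rfl, h, ENNReal.mul_top (by norm_num)] at h2
    exact not_top_lt h2
  have hA0 : A ≠ 0 := by
    intro h0
    have hIz : I = 0 := by
      rcases mul_eq_zero.mp (hAdef ▸ h0) with h | h
      · exact absurd (ENNReal.inv_eq_zero.mp h) hσtop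
      · exact h
    have hI0 : ∫⁻ x in F₀.carrier, ENNReal.ofReal (f x) ∂σ = 0 :=
      le_antisymm (hIz ▸ lintegral_mono_set hF₀.1) (zero_le)
    have havg0 : avg σ f F₀ = 0 := by rw [avg, hI0, mul_zero]
    have h2 := hF₀.2.1
    rw [show avg σ f F = A from rfl, h0, mul_zero, havg0] at h2
    exact lt_irrefl _ h2
  have key : ∀ F' : chPrin σ f F,
      2 * A * σ F'.1.carrier ≤ ∫⁻ x in F'.1.carrier, ENNReal.ofReal (f x) ∂σ := by
    rintro ⟨F', hF'⟩
    by_cases hz : σ F'.carrier = 0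
    · simp [hz]
    have hnt : σ F'.carrier ≠ ⊤ := fun h =>
      hσtop (top_le_iff.mp (h ▸ measure_mono hF'.1))
    have hlt := hF'.2.1
    have hcancel : avg σ f F' * σ F'.carrier
        = ∫⁻ x in F'.carrier, ENNReal.ofReal (f x) ∂σ := by
      rw [show avg σ f F' = (σ F'.carrier)⁻¹ *
          ∫⁻ x in F'.carrier, ENNReal.ofReal (f x) ∂σ from rfl,
        mul_comm ((σ F'.carrier)⁻¹) _, mul_assoc,
        ENNReal.inv_mul_cancel hz hnt, mul_one]
    calc 2 * A * σ F'.carrier ≤ avg σ f F' * σ F'.carrier :=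
          mul_le_mul_left (hA ▸ hlt.le) _
      _ = _ := hcancel
  set S := ∑' F' : chPrin σ f F, σ F'.1.carrier with hS
  have hdisj : Pairwise (Function.onFun Disjoint fun F' : chPrin σ f F => F'.1.carrier) :=
    fun i j hij => aux_children_disjoint i.2 j.2 (fun h => hij (Subtype.ext h))
  have hsum : 2 * A * S ≤ I := by
    rw [hS, ← ENNReal.tsum_mul_left]
    calc ∑' F' : chPrin σ f F, 2 * A * σ F'.1.carrier
        ≤ ∑' F' : chPrin σ f F, ∫⁻ x in F'.1.carrier, ENNReal.ofReal (f x) ∂σ :=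
          ENNReal.tsum_le_tsum key
      _ = ∫⁻ x in ⋃ F' : chPrin σ f F, F'.1.carrier, ENNReal.ofReal (f x) ∂σ := by
          exact (lintegral_iUnion (fun F' : chPrin σ f F => aux_measurableSet_carrier F'.1)
            hdisj (fun x => ENNReal.ofReal (f x))).symm
      _ ≤ I := lintegral_mono_set (Set.iUnion_subset fun F' => F'.2.1)
  have hIA : I = A * σ F.carrier := by
    rw [hAdef, mul_comm, ← mul_assoc, ENNReal.mul_inv_cancel hσ0 hσtop, one_mul]
  rw [hIA, mul_assoc, mul_left_comm] at hsum
  have h2S : 2 * S ≤ σ F.carrier :=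
    (ENNReal.mul_le_mul_iff_right hA0 hAtop).mp hsum
  exact (ENNReal.le_div_iff_mul_le (Or.inl two_ne_zero)
    (Or.inl (by norm_num))).mpr (by rwa [mul_comm] at h2S)
end
end

section
/- Let 1 < p < ∞, let σ be a positive Borel measure on ℝⁿ, let Q₀ be a dyadic cube, let f ∈ L^p(dσ) be nonnegative and supported in Q₀, and let F be the collection of principal cubes for the pair (f,σ). Then ∑_{F ∈ F} (⨍_F f dσ)^p σ(F) ≤ C ‖f‖_{L^p(dσ)}^p, where C depends only on p. -/
open MeasureTheory ENNReal Set
open scoped BigOperators NNReal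

noncomputable section

namespace DyadicCube

variable {n : ℕ}

lemma corner_mem (Q : DyadicCube n) : (fun i => (Q.m i : ℝ) * 2 ^ (-Q.k)) ∈ Q.carrier := by
  intro i
  have h : (0:ℝ) < 2 ^ (-Q.k) := by positivity
  refine ⟨le_refl _, ?_⟩
  show (Q.m i:ℝ) * 2 ^ (-Q.k) < ((Q.m i:ℝ) + 1) * 2 ^ (-Q.k)
  nlinarith

lemma carrier_nonempty (Q : DyadicCube n) : Q.carrier.Nonempty :=
  ⟨_, corner_mem Q⟩

lemma measurableSet_carrier (Q : DyadicCube n) : MeasurableSet Q.carrier := by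
  have h : Q.carrier = ⋂ i, (fun x : RN n => x i) ⁻¹'
      Set.Ico ((Q.m i : ℝ) * 2 ^ (-Q.k)) (((Q.m i : ℝ) + 1) * 2 ^ (-Q.k)) := by
    ext x
    simp [carrier, Set.mem_Ico, Set.mem_iInter]
  rw [h]
  exact MeasurableSet.iInter fun i => (measurable_pi_apply i) measurableSet_Ico

lemma subset_of_k_le {Q R : DyadicCube n} (hk : R.k ≤ Q.k) {x : RN n}
    (hxQ : x ∈ Q.carrier) (hxR : x ∈ R.carrier) : Q.carrier ⊆ R.carrier := by
  intro y hy i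
  obtain ⟨h1, h2⟩ := hxQ i
  obtain ⟨h3, h4⟩ := hxR i
  obtain ⟨h5, h6⟩ := hy i
  have hs : (0:ℝ) < 2 ^ (-Q.k) := by positivity
  have ht : (0:ℝ) < 2 ^ (-R.k) := by positivity
  set N : ℤ := 2 ^ (Q.k - R.k).toNat with hN
  have hNr : ((N : ℝ)) * 2 ^ (-Q.k) = 2 ^ (-R.k) := by
    have hN2 : ((N:ℝ)) = 2 ^ (Q.k - R.k) := by
      rw [hN]
      push_cast
      rw [← zpow_natCast (2:ℝ) (Q.k - R.k).toNat, Int.toNat_of_nonneg (by omega)]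
    rw [hN2, ← zpow_add₀ (by norm_num : (2:ℝ) ≠ 0)]
    congr 1
    ring
  have key1 : (R.m i * N : ℤ) ≤ Q.m i := by
    have hlt : ((R.m i : ℝ)) * N * 2 ^ (-Q.k) < ((Q.m i:ℝ) + 1) * 2 ^ (-Q.k) := by
      calc ((R.m i : ℝ)) * N * 2 ^ (-Q.k) = (R.m i) * 2 ^ (-R.k) := by rw [mul_assoc, hNr]
      _ ≤ x i := h3
      _ < _ := h2
    have h' : ((R.m i : ℝ)) * N < (Q.m i:ℝ) + 1 := (mul_lt_mul_iff_left₀ hs).mp hlt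
    have h'' : (R.m i * N : ℤ) < Q.m i + 1 := by exact_mod_cast h'
    omega
  have key2 : (Q.m i + 1 : ℤ) ≤ (R.m i + 1) * N := by
    have hlt : ((Q.m i : ℝ)) * 2 ^ (-Q.k) < ((R.m i:ℝ) + 1) * N * 2 ^ (-Q.k) := by
      calc ((Q.m i:ℝ)) * 2 ^ (-Q.k) ≤ x i := h1
      _ < ((R.m i:ℝ) + 1) * 2 ^ (-R.k) := h4
      _ = ((R.m i:ℝ) + 1) * N * 2 ^ (-Q.k) := by rw [mul_assoc, hNr]
    have h' : ((Q.m i:ℝ)) < ((R.m i:ℝ) + 1) * N := (mul_lt_mul_iff_left₀ hs).mp hlt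
    have h'' : (Q.m i : ℤ) < (R.m i + 1) * N := by exact_mod_cast h'
    omega
  constructor
  · calc ((R.m i:ℝ)) * 2 ^ (-R.k) = (R.m i) * N * 2 ^ (-Q.k) := by rw [mul_assoc, hNr]
    _ ≤ (Q.m i) * 2 ^ (-Q.k) := by
        have hc : ((R.m i * N : ℤ):ℝ) ≤ ((Q.m i : ℤ):ℝ) := by exact_mod_cast key1
        push_cast at hc
        nlinarith
    _ ≤ y i := h5
  · calc y i < ((Q.m i:ℝ) + 1) * 2 ^ (-Q.k) := h6
    _ ≤ ((R.m i:ℝ) + 1) * N * 2 ^ (-Q.k) := by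
        have hc : ((Q.m i + 1 : ℤ):ℝ) ≤ (((R.m i + 1) * N : ℤ):ℝ) := by exact_mod_cast key2
        push_cast at hc
        nlinarith
    _ = ((R.m i:ℝ) + 1) * 2 ^ (-R.k) := by rw [mul_assoc, hNr]

lemma nested_of_mem {Q R : DyadicCube n} {x : RN n}
    (hxQ : x ∈ Q.carrier) (hxR : x ∈ R.carrier) :
    Q.carrier ⊆ R.carrier ∨ R.carrier ⊆ Q.carrier := by
  rcases le_total R.k Q.k with h | h
  · exact Or.inl (subset_of_k_le h hxQ hxR)
  · exact Or.inr (subset_of_k_le h hxR hxQ)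

lemma carrier_injective_aux {Q R : DyadicCube n} (hn : 0 < n) (hk : Q.k ≤ R.k)
    (h : Q.carrier = R.carrier) : Q = R := by
  have hQR : (fun i => (Q.m i:ℝ) * 2 ^ (-Q.k)) ∈ R.carrier := h ▸ corner_mem Q
  have hRQ : (fun i => (R.m i:ℝ) * 2 ^ (-R.k)) ∈ Q.carrier := h.symm ▸ corner_mem R
  have heq : ∀ i, (Q.m i : ℝ) * 2 ^ (-Q.k) = (R.m i:ℝ) * 2 ^ (-R.k) := fun i =>
    le_antisymm ((hRQ i).1) ((hQR i).1)
  have hkk : Q.k = R.k := by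
    by_contra hne
    have hlt : Q.k < R.k := lt_of_le_of_ne hk hne
    set i₀ : Fin n := ⟨0, hn⟩
    have h2 : (2:ℝ) ^ (-R.k) < 2 ^ (-Q.k) := zpow_lt_zpow_right₀ (by norm_num) (by omega)
    have h2pos : (0:ℝ) < 2 ^ (-R.k) := by positivity
    set z : RN n := Function.update (fun i => (Q.m i:ℝ) * 2 ^ (-Q.k)) i₀
      ((Q.m i₀:ℝ) * 2 ^ (-Q.k) + 2 ^ (-R.k)) with hz
    have hzQ : z ∈ Q.carrier := by
      intro i
      by_cases hi : i = i₀
      · subst hi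
        rw [hz, Function.update_self]
        constructor
        · linarith
        · nlinarith
      · rw [hz, Function.update_of_ne hi]
        exact corner_mem Q i
    have hzR : z ∈ R.carrier := h ▸ hzQ
    have hup := (hzR i₀).2
    rw [hz, Function.update_self] at hup
    have : ((R.m i₀:ℝ) + 1) * 2 ^ (-R.k) = (Q.m i₀:ℝ) * 2 ^ (-Q.k) + 2 ^ (-R.k) := by
      rw [add_mul, one_mul, ← heq i₀]
    linarith [this ▸ hup]
  have hm : ∀ i, Q.m i = R.m i := by
    intro i
    have := heq i
    rw [hkk] at this
    have hpos : (0:ℝ) < 2 ^ (-R.k) := by positivity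
    have : (Q.m i : ℝ) = R.m i := mul_right_cancel₀ (ne_of_gt hpos) this
    exact_mod_cast this
  cases Q with
  | mk qk qm =>
    cases R with
    | mk rk rm =>
      simp only [mk.injEq]
      exact ⟨hkk, funext hm⟩

lemma carrier_injective {Q R : DyadicCube n} (hn : 0 < n)
    (h : Q.carrier = R.carrier) : Q = R := by
  rcases le_total Q.k R.k with hk | hk
  · exact carrier_injective_aux hn hk h
  · exact (carrier_injective_aux hn hk h.symm).symm

lemma avg_congr (σ : Measure (RN n)) (f : RN n → ℝ) {Q R : DyadicCube n}
    (h : Q.carrier = R.carrier) : avg σ f Q = avg σ f R := by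
  unfold avg
  rw [h]

lemma prinLevel_subset (σ : Measure (RN n)) (f : RN n → ℝ) (Q₀ : DyadicCube n) :
    ∀ m F, F ∈ prinLevel σ f Q₀ m → F.carrier ⊆ Q₀.carrier := by
  intro m
  induction m with
  | zero =>
    intro F hF
    have : F = Q₀ := hF
    rw [this]
  | succ m ih =>
    intro F hF
    simp only [prinLevel, Set.mem_iUnion] at hF
    obtain ⟨P, hP, hFP⟩ := hF
    exact hFP.1.trans (ih P hP)

lemma carrier_dim_zero (Q : DyadicCube 0) : Q.carrier = Set.univ :=
  Set.eq_univ_of_forall fun _ i => i.elim0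

lemma chPrin_dim_zero (σ : Measure (RN 0)) (f : RN 0 → ℝ) (F : DyadicCube 0) :
    chPrin σ f F = ∅ := by
  rw [Set.eq_empty_iff_forall_notMem]
  rintro Q ⟨-, h2, -⟩
  have he : avg σ f Q = avg σ f F :=
    avg_congr σ f (by rw [carrier_dim_zero, carrier_dim_zero])
  rw [he] at h2
  exact absurd h2 (not_lt.mpr (le_mul_of_one_le_left (zero_le) one_le_two))

lemma prinLevel_dim_zero (σ : Measure (RN 0)) (f : RN 0 → ℝ) (Q₀ : DyadicCube 0) :
    ∀ m, prinLevel σ f Q₀ m ⊆ {Q₀} := by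
  intro m
  induction m with
  | zero => exact subset_rfl
  | succ m ih =>
    intro F hF
    simp only [prinLevel, Set.mem_iUnion] at hF
    obtain ⟨P, hP, hFP⟩ := hF
    rw [chPrin_dim_zero] at hFP
    exact absurd hFP (Set.notMem_empty F)

lemma tree (σ : Measure (RN n)) (f : RN n → ℝ) (Q₀ : DyadicCube n) :
    ∀ (N m j : ℕ), m + j ≤ N → ∀ G F : DyadicCube n, G ∈ prinLevel σ f Q₀ m →
      F ∈ prinLevel σ f Q₀ j → G.carrier ⊆ F.carrier →
      F.carrier ⊆ G.carrier ∨ 2 * avg σ f F < avg σ f G := by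
  intro N
  induction N with
  | zero =>
    intro m j hmj G F hG hF _
    have hm : m = 0 := by omega
    subst hm
    obtain rfl : G = Q₀ := hG
    exact Or.inl (prinLevel_subset σ f _ j F hF)
  | succ N ih =>
    intro m j hmj G F hG hF hGF
    match m, hG with
    | 0, hG =>
      obtain rfl : G = Q₀ := hG
      exact Or.inl (prinLevel_subset σ f _ j F hF)
    | m + 1, hG => ?_
    simp only [prinLevel, Set.mem_iUnion] at hG
    obtain ⟨P, hP, hGP⟩ := hG
    obtain ⟨hGsub, hGavg, hGmax⟩ := hGP
    obtain ⟨x, hx⟩ := carrier_nonempty G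
    rcases nested_of_mem (hGF hx) (hGsub hx) with hFP | hPF
    · -- F.carrier ⊆ P.carrier
      by_cases hB : 2 * avg σ f P < avg σ f F
      · have hFG : F = G := hGmax F hFP hGF hB
        exact Or.inl (le_of_eq (congrArg carrier hFG))
      · rcases ih j m (by omega) F P hF hP hFP with hPF' | hlt
        · have hc : F.carrier = P.carrier := subset_antisymm hFP hPF'
          right
          rw [avg_congr σ f hc]
          exact hGavg
        · exact absurd hlt hB
    · -- P.carrier ⊆ F.carrier
      rcases ih m j (by omega) P F hP hF hPF with hFP' | hlt
      · have hc : F.carrier = P.carrier := subset_antisymm hFP' hPF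
        right
        rw [avg_congr σ f hc]
        exact hGavg
      · right
        calc 2 * avg σ f F < avg σ f P := hlt
        _ ≤ 2 * avg σ f P := le_mul_of_one_le_left (zero_le) one_le_two
        _ < avg σ f G := hGavg

lemma principal_carrier_ne (σ : Measure (RN n)) (f : RN n → ℝ) (Q₀ : DyadicCube n)
    {F G : DyadicCube n} (hF : F ∈ principal σ f Q₀) (hG : G ∈ principal σ f Q₀)
    (hne : F ≠ G) : F.carrier ≠ G.carrier := by
  intro hc
  rcases Nat.eq_zero_or_pos n with hn | hn
  · subst hn
    obtain ⟨mF, hmF⟩ := Set.mem_iUnion.1 hF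
    obtain ⟨mG, hmG⟩ := Set.mem_iUnion.1 hG
    have h1 : F = Q₀ := prinLevel_dim_zero σ f Q₀ mF hmF
    have h2 : G = Q₀ := prinLevel_dim_zero σ f Q₀ mG hmG
    exact hne (h1.trans h2.symm)
  · exact hne (carrier_injective hn hc)

lemma two_rpow_eq (y : ℝ) : (2:ℝ≥0∞) ^ y = ENNReal.ofReal ((2:ℝ) ^ y) := by
  rw [show (2:ℝ≥0∞) = ENNReal.ofReal 2 by simp]
  exact ENNReal.ofReal_rpow_of_pos (by norm_num)

lemma two_rpow_pos (y : ℝ) : 0 < (2:ℝ≥0∞) ^ y := by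
  rw [two_rpow_eq]
  exact ENNReal.ofReal_pos.mpr (Real.rpow_pos_of_pos two_pos y)

lemma two_rpow_ne_top (y : ℝ) : (2:ℝ≥0∞) ^ y ≠ ⊤ := by
  rw [two_rpow_eq]
  exact ENNReal.ofReal_ne_top

lemma band_disjoint (σ : Measure (RN n)) (f : RN n → ℝ) (Q₀ : DyadicCube n)
    {F G : DyadicCube n} {k : ℤ}
    (hF : F ∈ principal σ f Q₀) (hG : G ∈ principal σ f Q₀) (hne : F ≠ G)
    (hF1 : (2:ℝ≥0∞) ^ (k:ℝ) < avg σ f F) (hF2 : avg σ f F ≤ 2 ^ ((k:ℝ)+1))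
    (hG1 : (2:ℝ≥0∞) ^ (k:ℝ) < avg σ f G) (hG2 : avg σ f G ≤ 2 ^ ((k:ℝ)+1)) :
    Disjoint F.carrier G.carrier := by
  by_contra hd
  rw [Set.not_disjoint_iff] at hd
  obtain ⟨x, hxF, hxG⟩ := hd
  obtain ⟨mF, hmF⟩ := Set.mem_iUnion.1 hF
  obtain ⟨mG, hmG⟩ := Set.mem_iUnion.1 hG
  have key : ∀ (A B : DyadicCube n) (ma mb : ℕ), A ∈ prinLevel σ f Q₀ ma →
      B ∈ prinLevel σ f Q₀ mb → A ≠ B → A.carrier ⊆ B.carrier →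
      (2:ℝ≥0∞) ^ (k:ℝ) < avg σ f B → avg σ f A ≤ 2 ^ ((k:ℝ)+1) → False := by
    intro A B ma mb hA hB hABne hAB hB1 hA2
    rcases tree σ f Q₀ (ma + mb) ma mb le_rfl A B hA hB hAB with hBA | hlt
    · exact principal_carrier_ne σ f Q₀ (Set.mem_iUnion.2 ⟨ma, hA⟩)
        (Set.mem_iUnion.2 ⟨mb, hB⟩) hABne (subset_antisymm hAB hBA)
    · have h1 : (2:ℝ≥0∞) * 2 ^ (k:ℝ) < 2 * avg σ f B :=
        (ENNReal.mul_lt_mul_iff_right two_ne_zero ENNReal.ofNat_ne_top).mpr hB1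
      have h2 : (2:ℝ≥0∞) * 2 ^ (k:ℝ) = 2 ^ ((k:ℝ)+1) := by
        rw [ENNReal.rpow_add _ _ two_ne_zero ENNReal.ofNat_ne_top, ENNReal.rpow_one, mul_comm]
      have : avg σ f A < avg σ f A :=
        lt_of_le_of_lt hA2 (lt_of_le_of_lt (le_of_eq h2.symm) (lt_trans h1 hlt))
      exact lt_irrefl _ this
  rcases nested_of_mem hxF hxG with hFG | hGF
  · exact key F G mF mG hmF hmG hne hFG hG1 hF2
  · exact key G F mG mF hmG hmF hne.symm hGF hF1 hG2

/-- The band index of a cube. -/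
def kOf (σ : Measure (RN n)) (f : RN n → ℝ) (Q : DyadicCube n) : ℤ :=
  ⌈Real.logb 2 (avg σ f Q).toReal⌉ - 1

lemma kOf_spec (σ : Measure (RN n)) (f : RN n → ℝ) {Q : DyadicCube n}
    (h0 : avg σ f Q ≠ 0) (ht : avg σ f Q ≠ ⊤) :
    (2:ℝ≥0∞) ^ ((kOf σ f Q : ℤ) : ℝ) < avg σ f Q ∧
      avg σ f Q ≤ (2:ℝ≥0∞) ^ (((kOf σ f Q : ℤ) : ℝ) + 1) := by
  have hap : 0 < (avg σ f Q).toReal := ENNReal.toReal_pos h0 ht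
  have havg : avg σ f Q = ENNReal.ofReal (avg σ f Q).toReal := (ENNReal.ofReal_toReal ht).symm
  have h2L : (2:ℝ) ^ Real.logb 2 (avg σ f Q).toReal = (avg σ f Q).toReal :=
    Real.rpow_logb two_pos (by norm_num) hap
  constructor
  · rw [two_rpow_eq, havg, ENNReal.ofReal_lt_ofReal_iff hap]
    have hlt : ((kOf σ f Q : ℤ):ℝ) < Real.logb 2 (avg σ f Q).toReal := by
      have hc := Int.ceil_lt_add_one (Real.logb 2 (avg σ f Q).toReal)
      unfold kOf
      push_cast
      linarith
    calc (2:ℝ) ^ ((kOf σ f Q : ℤ):ℝ) < 2 ^ Real.logb 2 (avg σ f Q).toReal :=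
          (Real.rpow_lt_rpow_left_iff one_lt_two).mpr hlt
    _ = (avg σ f Q).toReal := h2L
  · rw [two_rpow_eq, havg]
    apply ENNReal.ofReal_le_ofReal
    have hle : Real.logb 2 (avg σ f Q).toReal ≤ ((kOf σ f Q : ℤ):ℝ) + 1 := by
      have hc := Int.le_ceil (Real.logb 2 (avg σ f Q).toReal)
      unfold kOf
      push_cast
      linarith
    calc (avg σ f Q).toReal = 2 ^ Real.logb 2 (avg σ f Q).toReal := h2L.symm
    _ ≤ _ := (Real.rpow_le_rpow_left_iff one_lt_two).mpr hle

lemma avg_pow_mul_le (σ : Measure (RN n)) (f : RN n → ℝ) (Q : DyadicCube n)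
    {g : RN n → ℝ≥0∞} (hg : AEMeasurable g σ)
    (havg : avg σ f Q = (σ Q.carrier)⁻¹ * ∫⁻ x in Q.carrier, g x ∂σ)
    {p : ℝ} (hp : 1 < p) :
    avg σ f Q ^ p * σ Q.carrier ≤ ∫⁻ x in Q.carrier, g x ^ p ∂σ := by
  have hp0 : (0:ℝ) < p := lt_trans one_pos hp
  rcases eq_or_ne (σ Q.carrier) 0 with hσ | hσ0
  · have hz : avg σ f Q = 0 := by
      rw [havg, Measure.restrict_eq_zero.mpr hσ, lintegral_zero_measure, mul_zero]
    rw [hz, ENNReal.zero_rpow_of_pos hp0, zero_mul]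
    exact zero_le
  rcases eq_or_ne (σ Q.carrier) ⊤ with hσt | hσt
  · have hz : avg σ f Q = 0 := by rw [havg, hσt, ENNReal.inv_top, zero_mul]
    rw [hz, ENNReal.zero_rpow_of_pos hp0, zero_mul]
    exact zero_le
  rcases eq_or_ne (∫⁻ x in Q.carrier, g x ^ p ∂σ) ⊤ with hI | hI
  · rw [hI]; exact le_top
  have hpq : p.HolderConjugate (p / (p - 1)) := Real.HolderConjugate.conjExponent hp
  have holder := ENNReal.lintegral_mul_le_Lp_mul_Lq (σ.restrict Q.carrier) hpq
    hg.restrict (aemeasurable_const (b := (1:ℝ≥0∞)))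
  simp only [Pi.mul_apply, mul_one, ENNReal.one_rpow] at holder
  rw [lintegral_one, Measure.restrict_apply_univ] at holder
  -- holder : ∫⁻ g ≤ I^(1/p) * M^(1/q)
  set I := ∫⁻ x in Q.carrier, g x ^ p ∂σ with hIdef
  set M := σ Q.carrier with hMdef
  set q := p / (p - 1) with hqdef
  have hpq' : p / q = p - 1 := by
    rw [hqdef]
    field_simp
  have havle : avg σ f Q ≤ M⁻¹ * (I ^ (1/p) * M ^ (1/q)) := by
    rw [havg]
    exact mul_le_mul_right holder _
  have hkey : avg σ f Q ^ p ≤ (M ^ p)⁻¹ * I * M ^ (p - 1) := by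
    calc avg σ f Q ^ p ≤ (M⁻¹ * (I ^ (1/p) * M ^ (1/q))) ^ p :=
          ENNReal.rpow_le_rpow havle hp0.le
    _ = (M⁻¹) ^ p * ((I ^ (1/p)) ^ p * (M ^ (1/q)) ^ p) := by
          rw [ENNReal.mul_rpow_of_nonneg _ _ hp0.le, ENNReal.mul_rpow_of_nonneg _ _ hp0.le]
    _ = (M ^ p)⁻¹ * I * M ^ (p - 1) := by
          rw [ENNReal.inv_rpow, ← ENNReal.rpow_mul I, ← ENNReal.rpow_mul M,
            one_div_mul_cancel hp0.ne', ENNReal.rpow_one,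
            show 1/q * p = p/q by ring, hpq', mul_assoc]
  have hMp0 : M ^ p ≠ 0 := (ENNReal.rpow_pos (pos_iff_ne_zero.mpr hσ0) hσt).ne'
  have hMpt : M ^ p ≠ ⊤ := ENNReal.rpow_ne_top_of_nonneg hp0.le hσt
  calc avg σ f Q ^ p * M ≤ ((M ^ p)⁻¹ * I * M ^ (p - 1)) * M :=
        mul_le_mul_left hkey _
  _ = I * ((M ^ p)⁻¹ * (M ^ (p-1) * M)) := by ring
  _ = I := by
      rw [show M ^ (p-1) * M = M ^ p by
        nth_rewrite 2 [← ENNReal.rpow_one M]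
        rw [← ENNReal.rpow_add _ _ hσ0 hσt]
        norm_num]
      rw [ENNReal.inv_mul_cancel hMp0 hMpt, mul_one]

end DyadicCube



open DyadicCube
/-- The Carleson embedding estimate for principal cubes:
`∑_{F ∈ F} (⨍_F f dσ)^p σ(F) ≤ C ‖f‖_{L^p(σ)}^p` with `C` depending only on `p`. -/
theorem sum_principal_avg_pow_le (p : ℝ) (hp₁ : 1 < p) :
    ∃ C : ℝ≥0, 0 < C ∧
      ∀ (n : ℕ) (σ : Measure (RN n)) (Q₀ : DyadicCube n) (f : RN n → ℝ),
        MemLp f (ENNReal.ofReal p) σ → (∀ x, 0 ≤ f x) →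
        Function.support f ⊆ Q₀.carrier →
        ∑' F : principal σ f Q₀, avg σ f F.1 ^ p * σ F.1.carrier ≤
          C * eLpNorm f (ENNReal.ofReal p) σ ^ p := by
  
  classical
  have hp0 : (0:ℝ) < p := one_pos.trans hp₁
  have h2t : (2:ℝ≥0∞) ≠ ⊤ := ENNReal.ofNat_ne_top
  set r : ℝ≥0∞ := (2:ℝ≥0∞) ^ (-(p-1)) with hr
  have hrlt : r < 1 := by
    rw [hr, two_rpow_eq]
    exact ENNReal.ofReal_lt_one.mpr
      (Real.rpow_lt_one_of_one_lt_of_neg one_lt_two (by linarith))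
  set C₀ : ℝ≥0∞ := (2:ℝ≥0∞) ^ (2*p) * (1 - r)⁻¹ with hC
  have h1rt : (1:ℝ≥0∞) - r ≠ ⊤ := ne_top_of_le_ne_top ENNReal.one_ne_top tsub_le_self
  have hC₀top : C₀ ≠ ⊤ := by
    apply ENNReal.mul_ne_top (two_rpow_ne_top _)
    rw [Ne, ENNReal.inv_eq_top]
    exact (tsub_pos_of_lt hrlt).ne'
  have hC₀0 : C₀ ≠ 0 := by
    apply mul_ne_zero (two_rpow_pos _).ne'
    rw [Ne, ENNReal.inv_eq_zero]
    exact h1rt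
  refine ⟨C₀.toNNReal, ENNReal.toNNReal_pos hC₀0 hC₀top, ?_⟩
  intro n σ Q₀ f hf hf0 _
  have hcoe : (C₀.toNNReal : ℝ≥0∞) = C₀ := ENNReal.coe_toNNReal hC₀top
  rw [hcoe]
  -- measurable representative of ofReal ∘ f
  have hfm : AEMeasurable (fun x => ENNReal.ofReal (f x)) σ :=
    hf.1.aemeasurable.ennreal_ofReal
  set g : RN n → ℝ≥0∞ := hfm.mk _ with hgdef
  have hg : Measurable g := hfm.measurable_mk
  have hge : (fun x => ENNReal.ofReal (f x)) =ᵐ[σ] g := hfm.ae_eq_mk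
  have havg : ∀ Q : DyadicCube n,
      avg σ f Q = (σ Q.carrier)⁻¹ * ∫⁻ x in Q.carrier, g x ∂σ := by
    intro Q
    unfold avg
    congr 1
    exact lintegral_congr_ae (ae_restrict_of_ae hge)
  set N : ℝ≥0∞ := ∫⁻ x, g x ^ p ∂σ with hNdef
  have hNeq : N = eLpNorm f (ENNReal.ofReal p) σ ^ p := by
    have h0 : ENNReal.ofReal p ≠ 0 := by
      simp only [Ne, ENNReal.ofReal_eq_zero, not_le]
      exact hp0
    have h1 : eLpNorm f (ENNReal.ofReal p) σ
        = (∫⁻ x, ENNReal.ofReal (f x) ^ p ∂σ) ^ (1/p) := by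
      rw [eLpNorm_eq_lintegral_rpow_enorm_toReal h0 ENNReal.ofReal_ne_top,
        ENNReal.toReal_ofReal hp0.le]
      congr 1
      exact lintegral_congr fun x => by rw [Real.enorm_eq_ofReal (hf0 x)]
    have h2 : (∫⁻ x, ENNReal.ofReal (f x) ^ p ∂σ) = N :=
      lintegral_congr_ae (hge.mono fun x hx => by simp only [hx])
    rw [h1, h2, ← ENNReal.rpow_mul, one_div, inv_mul_cancel₀ hp0.ne', ENNReal.rpow_one]
  have hN : N ≠ ⊤ := by
    rw [hNeq]
    exact (ENNReal.rpow_lt_top_of_nonneg hp0.le hf.2.ne).ne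
  have hH1 : ∀ Q : DyadicCube n,
      avg σ f Q ^ p * σ Q.carrier ≤ ∫⁻ x in Q.carrier, g x ^ p ∂σ := fun Q =>
    avg_pow_mul_le σ f Q hg.aemeasurable (havg Q) hp₁
  have havg_zero : ∀ Q : DyadicCube n, σ Q.carrier = 0 ∨ σ Q.carrier = ⊤ → avg σ f Q = 0 := by
    intro Q hQ
    rcases hQ with h | h
    · rw [havg Q, Measure.restrict_eq_zero.mpr h, lintegral_zero_measure, mul_zero]
    · rw [havg Q, h, ENNReal.inv_top, zero_mul]
  have havg_top : ∀ Q : DyadicCube n, avg σ f Q ≠ ⊤ := by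
    intro Q
    rcases eq_or_ne (σ Q.carrier) 0 with h | h
    · rw [havg_zero Q (Or.inl h)]; exact ENNReal.zero_ne_top
    rcases eq_or_ne (σ Q.carrier) ⊤ with h' | h'
    · rw [havg_zero Q (Or.inr h')]; exact ENNReal.zero_ne_top
    · intro htop
      have hle := (hH1 Q).trans (setLIntegral_le_lintegral _ _)
      rw [htop, ENNReal.top_rpow_of_pos hp0, ENNReal.top_mul h] at hle
      exact hN (top_le_iff.mp hle)
  -- the level sets of g
  set A : ℤ → Set (RN n) := fun k => {y | (2:ℝ≥0∞) ^ ((k:ℝ) - 1) < g y} with hA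
  have hAmeas : ∀ k, MeasurableSet (A k) := fun k =>
    measurableSet_lt measurable_const hg
  -- Step 3+4 : per-band estimate
  have step34 : ∀ k : ℤ, (∑' Q : DyadicCube n,
      if Q ∈ principal σ f Q₀ ∧ kOf σ f Q = k then avg σ f Q ^ p * σ Q.carrier else 0)
      ≤ (2:ℝ≥0∞) ^ ((k:ℝ)*(p-1) + (p+1)) * ∫⁻ x in A k, g x ∂σ := by
    intro k
    set cond : DyadicCube n → Prop :=
      fun Q => Q ∈ principal σ f Q₀ ∧ kOf σ f Q = k ∧ avg σ f Q ≠ 0 with hcond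
    have hband : ∀ Q, cond Q →
        (2:ℝ≥0∞) ^ ((k:ℝ)) < avg σ f Q ∧ avg σ f Q ≤ 2 ^ ((k:ℝ)+1) := by
      rintro Q ⟨-, hk, h0⟩
      have hs := kOf_spec σ f h0 (havg_top Q)
      rw [hk] at hs
      exact hs
    have hσfin : ∀ Q, cond Q → σ Q.carrier ≠ 0 ∧ σ Q.carrier ≠ ⊤ := by
      intro Q hQ
      constructor
      · intro h; exact hQ.2.2 (havg_zero Q (Or.inl h))
      · intro h; exact hQ.2.2 (havg_zero Q (Or.inr h))
    have t1 : ∀ Q : DyadicCube n,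
        (if Q ∈ principal σ f Q₀ ∧ kOf σ f Q = k then avg σ f Q ^ p * σ Q.carrier else 0)
        ≤ (2:ℝ≥0∞) ^ (((k:ℝ)+1) * p) * (if cond Q then σ Q.carrier else 0) := by
      intro Q
      by_cases h1 : Q ∈ principal σ f Q₀ ∧ kOf σ f Q = k
      · rcases eq_or_ne (avg σ f Q) 0 with h0 | h0
        · rw [if_pos h1]
          exact le_trans (le_of_eq (by rw [h0, ENNReal.zero_rpow_of_pos hp0, zero_mul])) (zero_le)
        · have hc : cond Q := ⟨h1.1, h1.2, h0⟩
          rw [if_pos h1, if_pos hc]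
          apply mul_le_mul_left
          calc avg σ f Q ^ p ≤ ((2:ℝ≥0∞) ^ ((k:ℝ)+1)) ^ p :=
                ENNReal.rpow_le_rpow (hband Q hc).2 hp0.le
          _ = (2:ℝ≥0∞) ^ (((k:ℝ)+1) * p) := (ENNReal.rpow_mul 2 _ p).symm
      · rw [if_neg h1]
        exact zero_le
    have t2 : ∀ Q : DyadicCube n, (if cond Q then σ Q.carrier else 0)
        ≤ (2:ℝ≥0∞) ^ (1 - (k:ℝ)) *
          (if cond Q then ∫⁻ x in Q.carrier ∩ A k, g x ∂σ else 0) := by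
      intro Q
      by_cases hc : cond Q
      · rw [if_pos hc, if_pos hc]
        obtain ⟨hσ0, hσt⟩ := hσfin Q hc
        have hlow := (hband Q hc).1
        have h3 : (2:ℝ≥0∞) ^ ((k:ℝ)) * σ Q.carrier < ∫⁻ x in Q.carrier, g x ∂σ := by
          have h := (ENNReal.mul_lt_mul_iff_right hσ0 hσt).mpr hlow
          rw [havg Q, ← mul_assoc, ENNReal.mul_inv_cancel hσ0 hσt, one_mul,
            mul_comm (σ Q.carrier)] at h
          exact h
        have h5 : ∫⁻ x in Q.carrier \ A k, g x ∂σ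
            ≤ (2:ℝ≥0∞) ^ ((k:ℝ)-1) * σ Q.carrier := by
          calc ∫⁻ x in Q.carrier \ A k, g x ∂σ
              ≤ ∫⁻ _ in Q.carrier \ A k, (2:ℝ≥0∞) ^ ((k:ℝ)-1) ∂σ := by
                apply setLIntegral_mono' ((measurableSet_carrier Q).diff (hAmeas k))
                intro x hx
                have hnot : ¬ ((2:ℝ≥0∞) ^ ((k:ℝ) - 1) < g x) := hx.2
                exact not_lt.mp hnot
          _ = (2:ℝ≥0∞) ^ ((k:ℝ)-1) * σ (Q.carrier \ A k) := setLIntegral_const _ _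
          _ ≤ _ := mul_le_mul_right (measure_mono Set.diff_subset) _
        have h4 : ∫⁻ x in Q.carrier, g x ∂σ
            ≤ (∫⁻ x in Q.carrier ∩ A k, g x ∂σ) + (2:ℝ≥0∞) ^ ((k:ℝ)-1) * σ Q.carrier := by
          rw [← lintegral_inter_add_diff g Q.carrier (hAmeas k)]
          exact add_le_add le_rfl h5
        have hsplit : (2:ℝ≥0∞) ^ ((k:ℝ)) * σ Q.carrier
            = (2:ℝ≥0∞) ^ ((k:ℝ)-1) * σ Q.carrier + (2:ℝ≥0∞) ^ ((k:ℝ)-1) * σ Q.carrier := by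
          rw [← two_mul, ← mul_assoc]
          congr 1
          rw [show (k:ℝ) = 1 + ((k:ℝ)-1) by ring,
            ENNReal.rpow_add _ _ two_ne_zero h2t, ENNReal.rpow_one]
          ring_nf
        have h7 : (2:ℝ≥0∞) ^ ((k:ℝ)-1) * σ Q.carrier + (2:ℝ≥0∞) ^ ((k:ℝ)-1) * σ Q.carrier
            < (∫⁻ x in Q.carrier ∩ A k, g x ∂σ) + (2:ℝ≥0∞) ^ ((k:ℝ)-1) * σ Q.carrier := by
          rw [← hsplit]
          exact lt_of_lt_of_le h3 h4
        have h6 : (2:ℝ≥0∞) ^ ((k:ℝ)-1) * σ Q.carrier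
            < ∫⁻ x in Q.carrier ∩ A k, g x ∂σ :=
          (ENNReal.add_lt_add_iff_right (ENNReal.mul_ne_top (two_rpow_ne_top _) hσt)).mp h7
        calc σ Q.carrier
            = (2:ℝ≥0∞) ^ (1-(k:ℝ)) * ((2:ℝ≥0∞) ^ ((k:ℝ)-1) * σ Q.carrier) := by
              rw [← mul_assoc, ← ENNReal.rpow_add _ _ two_ne_zero h2t,
                show (1-(k:ℝ)) + ((k:ℝ)-1) = 0 by ring, ENNReal.rpow_zero, one_mul]
        _ ≤ (2:ℝ≥0∞) ^ (1-(k:ℝ)) * ∫⁻ x in Q.carrier ∩ A k, g x ∂σ :=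
              mul_le_mul_right h6.le _
      · rw [if_neg hc, if_neg hc, mul_zero]
    have hsum : (∑' Q : DyadicCube n,
        if cond Q then ∫⁻ x in Q.carrier ∩ A k, g x ∂σ else 0)
        ≤ ∫⁻ x in A k, g x ∂σ := by
      have hre := tsum_subtype {Q : DyadicCube n | cond Q}
        (fun Q => ∫⁻ x in Q.carrier ∩ A k, g x ∂σ)
      have hre2 : (∑' Q : DyadicCube n,
          if cond Q then ∫⁻ x in Q.carrier ∩ A k, g x ∂σ else 0)
          = ∑' (Q : {Q : DyadicCube n | cond Q}),
            ∫⁻ x in (Q : DyadicCube n).carrier ∩ A k, g x ∂σ := by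
        rw [hre]
        refine tsum_congr fun Q => ?_
        by_cases hc : cond Q
        · rw [if_pos hc]
          exact (Set.indicator_of_mem (show Q ∈ {Q : DyadicCube n | cond Q} from hc)
            (fun Q => ∫⁻ x in Q.carrier ∩ A k, g x ∂σ)).symm
        · rw [if_neg hc]
          exact (Set.indicator_of_notMem (show Q ∉ {Q : DyadicCube n | cond Q} from hc)
            (fun Q => ∫⁻ x in Q.carrier ∩ A k, g x ∂σ)).symm
      rw [hre2]
      have hdisj : Pairwise (Function.onFun Disjoint
          fun Q : {Q : DyadicCube n | cond Q} => (Q : DyadicCube n).carrier ∩ A k) := by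
        intro Q Q' hne
        have hb1 := hband _ Q.2
        have hb2 := hband _ Q'.2
        have hd : Disjoint (Q : DyadicCube n).carrier (Q' : DyadicCube n).carrier :=
          band_disjoint σ f Q₀ Q.2.1 Q'.2.1 (fun h => hne (Subtype.ext h))
            hb1.1 hb1.2 hb2.1 hb2.2
        exact hd.mono Set.inter_subset_left Set.inter_subset_left
      calc ∑' (Q : {Q : DyadicCube n | cond Q}),
            ∫⁻ x in (Q : DyadicCube n).carrier ∩ A k, g x ∂σ
          = ∫⁻ x in ⋃ Q : {Q : DyadicCube n | cond Q},
              ((Q : DyadicCube n).carrier ∩ A k), g x ∂σ :=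
            (lintegral_iUnion (fun Q => (measurableSet_carrier _).inter (hAmeas k)) hdisj g).symm
      _ ≤ ∫⁻ x in A k, g x ∂σ :=
            lintegral_mono_set (Set.iUnion_subset fun Q => Set.inter_subset_right)
    calc (∑' Q : DyadicCube n,
        if Q ∈ principal σ f Q₀ ∧ kOf σ f Q = k then avg σ f Q ^ p * σ Q.carrier else 0)
        ≤ ∑' Q : DyadicCube n,
            (2:ℝ≥0∞) ^ (((k:ℝ)+1) * p) * (if cond Q then σ Q.carrier else 0) :=
          ENNReal.tsum_le_tsum t1
    _ = (2:ℝ≥0∞) ^ (((k:ℝ)+1) * p) * ∑' Q : DyadicCube n, (if cond Q then σ Q.carrier else 0) :=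
          ENNReal.tsum_mul_left
    _ ≤ (2:ℝ≥0∞) ^ (((k:ℝ)+1) * p) * ∑' Q : DyadicCube n,
          ((2:ℝ≥0∞) ^ (1 - (k:ℝ)) *
            (if cond Q then ∫⁻ x in Q.carrier ∩ A k, g x ∂σ else 0)) :=
          mul_le_mul_right (ENNReal.tsum_le_tsum t2) _
    _ = (2:ℝ≥0∞) ^ (((k:ℝ)+1) * p) * ((2:ℝ≥0∞) ^ (1 - (k:ℝ)) *
          ∑' Q : DyadicCube n, (if cond Q then ∫⁻ x in Q.carrier ∩ A k, g x ∂σ else 0)) := by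
          rw [ENNReal.tsum_mul_left]
    _ ≤ (2:ℝ≥0∞) ^ (((k:ℝ)+1) * p) * ((2:ℝ≥0∞) ^ (1 - (k:ℝ)) * ∫⁻ x in A k, g x ∂σ) :=
          mul_le_mul_right (mul_le_mul_right hsum _) _
    _ = (2:ℝ≥0∞) ^ ((k:ℝ)*(p-1) + (p+1)) * ∫⁻ x in A k, g x ∂σ := by
          rw [← mul_assoc, ← ENNReal.rpow_add _ _ two_ne_zero h2t]
          congr 2
          ring
  -- Step 6 : pointwise geometric bound
  have step6 : ∀ x, (∑' k : ℤ,
      (2:ℝ≥0∞) ^ ((k:ℝ)*(p-1) + (p+1)) * (A k).indicator g x) ≤ C₀ * g x ^ p := by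
    intro x
    rcases eq_or_ne (g x) 0 with hx0 | hx0
    · have hz : ∀ k : ℤ, (2:ℝ≥0∞) ^ ((k:ℝ)*(p-1) + (p+1)) * (A k).indicator g x = 0 := by
        intro k
        rw [Set.indicator_of_notMem, mul_zero]
        simp only [hA, Set.mem_setOf_eq, not_lt, hx0]
        exact zero_le
      rw [tsum_congr hz, tsum_zero]
      exact zero_le
    rcases eq_or_ne (g x) ⊤ with hxt | hxt
    · rw [hxt, ENNReal.top_rpow_of_pos hp0, ENNReal.mul_top hC₀0]
      exact le_top
    · have hG'pos : 0 < (g x).toReal := ENNReal.toReal_pos hx0 hxt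
      have hgof : g x = ENNReal.ofReal (g x).toReal := (ENNReal.ofReal_toReal hxt).symm
      set L : ℝ := Real.logb 2 (g x).toReal with hL
      set K : ℤ := ⌈L⌉ with hK
      have h2L : (2:ℝ) ^ L = (g x).toReal := Real.rpow_logb two_pos (by norm_num) hG'pos
      have hterm : ∀ k : ℤ, (2:ℝ≥0∞) ^ ((k:ℝ)*(p-1) + (p+1)) * (A k).indicator g x
          ≤ (if k ≤ K then (2:ℝ≥0∞) ^ ((k:ℝ)*(p-1) + (p+1)) * g x else 0) := by
        intro k
        by_cases hmem : x ∈ A k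
        · have hk : k ≤ K := by
            have h1 : (2:ℝ≥0∞) ^ ((k:ℝ) - 1) < g x := hmem
            rw [hgof, two_rpow_eq, ENNReal.ofReal_lt_ofReal_iff hG'pos] at h1
            have h2 : ((k:ℝ) - 1) < L :=
              (Real.lt_logb_iff_rpow_lt one_lt_two hG'pos).mpr h1
            have h3 : (k - 1 : ℤ) < K := by
              rw [hK]
              exact Int.lt_ceil.mpr (by push_cast; linarith)
            omega
          rw [Set.indicator_of_mem hmem, if_pos hk]
        · rw [Set.indicator_of_notMem hmem, mul_zero]
          exact zero_le
      have hKb : (2:ℝ≥0∞) ^ ((K:ℝ)) ≤ 2 * g x := by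
        rw [two_rpow_eq, hgof,
          show (2:ℝ≥0∞) * ENNReal.ofReal (g x).toReal
            = ENNReal.ofReal (2 * (g x).toReal) by
              rw [ENNReal.ofReal_mul (by norm_num)]; simp]
        apply ENNReal.ofReal_le_ofReal
        have hc : (K:ℝ) - 1 ≤ L := by
          have := Int.ceil_lt_add_one L
          rw [hK]
          linarith
        calc (2:ℝ) ^ ((K:ℝ)) = 2 * 2 ^ ((K:ℝ) - 1) := by
              rw [show (2:ℝ) * 2 ^ ((K:ℝ)-1) = 2 ^ ((1:ℝ)+((K:ℝ)-1)) by
                rw [Real.rpow_add two_pos, Real.rpow_one]]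
              congr 1
              ring
        _ ≤ 2 * 2 ^ L := by
              have := (Real.rpow_le_rpow_left_iff one_lt_two).mpr hc
              linarith
        _ = 2 * (g x).toReal := by rw [h2L]
      have hj : ∀ j : ℕ, (2:ℝ≥0∞) ^ ((((K - j : ℤ)):ℝ)*(p-1) + (p+1))
          = ((2:ℝ≥0∞) ^ ((K:ℝ)*(p-1) + (p+1))) * r ^ (j:ℕ) := by
        intro j
        rw [hr, ← ENNReal.rpow_natCast ((2:ℝ≥0∞) ^ (-(p-1))) j, ← ENNReal.rpow_mul,
          ← ENNReal.rpow_add _ _ two_ne_zero h2t]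
        congr 1
        push_cast
        ring
      calc (∑' k : ℤ, (2:ℝ≥0∞) ^ ((k:ℝ)*(p-1) + (p+1)) * (A k).indicator g x)
          ≤ ∑' k : ℤ, (if k ≤ K then (2:ℝ≥0∞) ^ ((k:ℝ)*(p-1) + (p+1)) * g x else 0) :=
            ENNReal.tsum_le_tsum hterm
      _ = ∑' j : ℕ, (if (K - j : ℤ) ≤ K then
            (2:ℝ≥0∞) ^ ((((K - j : ℤ)):ℝ)*(p-1) + (p+1)) * g x else 0) := by
            refine (Function.Injective.tsum_eq (g := fun j : ℕ => (K - j : ℤ)) ?_ ?_).symm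
            · intro a b h
              simpa using h
            · intro k hk
              rw [Function.mem_support] at hk
              by_cases hkK : k ≤ K
              · exact ⟨(K - k).toNat, by show K - ((K - k).toNat : ℤ) = k; omega⟩
              · exact absurd (if_neg hkK) hk
      _ = ∑' j : ℕ, ((2:ℝ≥0∞) ^ ((K:ℝ)*(p-1) + (p+1)) * g x) * r ^ j := by
            refine tsum_congr fun j => ?_
            rw [if_pos (by omega : (K - j : ℤ) ≤ K), hj j]
            ring
      _ = ((2:ℝ≥0∞) ^ ((K:ℝ)*(p-1) + (p+1)) * g x) * (1 - r)⁻¹ := by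
            rw [ENNReal.tsum_mul_left, ENNReal.tsum_geometric]
      _ ≤ (((2:ℝ≥0∞) ^ (p+1) * ((2:ℝ≥0∞) ^ (p-1) * g x ^ (p-1))) * g x) * (1 - r)⁻¹ := by
            have hc1 : (2:ℝ≥0∞) ^ ((K:ℝ)*(p-1) + (p+1))
                ≤ (2:ℝ≥0∞) ^ (p+1) * ((2:ℝ≥0∞) ^ (p-1) * g x ^ (p-1)) := by
              rw [ENNReal.rpow_add _ _ two_ne_zero h2t, mul_comm ((2:ℝ≥0∞) ^ ((K:ℝ)*(p-1)))]
              apply mul_le_mul_right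
              calc (2:ℝ≥0∞) ^ ((K:ℝ)*(p-1)) = ((2:ℝ≥0∞) ^ ((K:ℝ))) ^ (p-1) :=
                    ENNReal.rpow_mul 2 (K:ℝ) (p-1)
              _ ≤ ((2:ℝ≥0∞) * g x) ^ (p-1) := ENNReal.rpow_le_rpow hKb (by linarith)
              _ = (2:ℝ≥0∞) ^ (p-1) * g x ^ (p-1) :=
                    ENNReal.mul_rpow_of_nonneg _ _ (by linarith)
            exact mul_le_mul_left (mul_le_mul_left hc1 _) _
      _ = C₀ * g x ^ p := by
            rw [hC]
            rw [show ((2:ℝ≥0∞) ^ (p+1) * ((2:ℝ≥0∞) ^ (p-1) * g x ^ (p-1))) * g x * (1 - r)⁻¹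
              = ((2:ℝ≥0∞) ^ (p+1) * (2:ℝ≥0∞) ^ (p-1)) * (1 - r)⁻¹ * (g x ^ (p-1) * g x) by
                ring]
            rw [← ENNReal.rpow_add _ _ two_ne_zero h2t,
              show (p+1)+(p-1) = 2*p by ring]
            congr 1
            nth_rewrite 2 [← ENNReal.rpow_one (g x)]
            rw [← ENNReal.rpow_add _ _ hx0 hxt]
            norm_num
  -- Step 5 : integrate the pointwise bound
  have step5 : (∑' k : ℤ, (2:ℝ≥0∞) ^ ((k:ℝ)*(p-1) + (p+1)) * ∫⁻ x in A k, g x ∂σ)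
      ≤ C₀ * N := by
    have hmeas : ∀ k : ℤ, AEMeasurable
        (fun x => (2:ℝ≥0∞) ^ ((k:ℝ)*(p-1) + (p+1)) * (A k).indicator g x) σ :=
      fun k => (measurable_const.mul (hg.indicator (hAmeas k))).aemeasurable
    calc (∑' k : ℤ, (2:ℝ≥0∞) ^ ((k:ℝ)*(p-1) + (p+1)) * ∫⁻ x in A k, g x ∂σ)
        = ∑' k : ℤ, ∫⁻ x, (2:ℝ≥0∞) ^ ((k:ℝ)*(p-1) + (p+1)) * (A k).indicator g x ∂σ := by
          refine tsum_congr fun k => ?_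
          rw [lintegral_const_mul _ (hg.indicator (hAmeas k)), lintegral_indicator (hAmeas k)]
    _ = ∫⁻ x, ∑' k : ℤ, (2:ℝ≥0∞) ^ ((k:ℝ)*(p-1) + (p+1)) * (A k).indicator g x ∂σ :=
          (lintegral_tsum hmeas).symm
    _ ≤ ∫⁻ x, C₀ * g x ^ p ∂σ := lintegral_mono step6
    _ = C₀ * N := lintegral_const_mul' _ _ hC₀top
  -- assemble everything
  calc (∑' F : ↥(principal σ f Q₀), avg σ f F.1 ^ p * σ F.1.carrier)
      ≤ ∑' q : ℤ × DyadicCube n, (if q.2 ∈ principal σ f Q₀ ∧ kOf σ f q.2 = q.1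
          then avg σ f q.2 ^ p * σ q.2.carrier else 0) := by
        apply ENNReal.summable.tsum_le_tsum_of_inj
          (fun F : ↥(principal σ f Q₀) => ((kOf σ f F.1, F.1) : ℤ × DyadicCube n))
        · intro F F' h
          simp only [Prod.mk.injEq] at h
          exact Subtype.ext h.2
        · intro c _
          exact zero_le
        · intro F
          exact le_of_eq (if_pos ⟨F.2, rfl⟩).symm
        · exact ENNReal.summable
  _ = ∑' (k : ℤ) (Q : DyadicCube n), (if Q ∈ principal σ f Q₀ ∧ kOf σ f Q = k
        then avg σ f Q ^ p * σ Q.carrier else 0) := ENNReal.tsum_prod'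
  _ ≤ ∑' k : ℤ, (2:ℝ≥0∞) ^ ((k:ℝ)*(p-1) + (p+1)) * ∫⁻ x in A k, g x ∂σ :=
        ENNReal.tsum_le_tsum step34
  _ ≤ C₀ * N := step5
  _ = C₀ * eLpNorm f (ENNReal.ofReal p) σ ^ p := by rw [hNeq]
end
end
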